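/- (Coalescing Lemma) Let n ≥ 3 and r ≥ n−1, and let g ∈ ni(A_n, C_{3^r}). Then g is braid equivalent to some tuple g' = (g'_1,…,g'_r) in which the first two entries satisfy one of: g'_2 = (g'_1)^{-1}; or the product g'_1 g'_2 is a 3-cycle; or g'_1 = g'_2. -/

import Mathlib

/-- Elementary braid move: replace adjacent entries `(a, b)` by `(a * b * a⁻¹, a)`. -/
def BraidMove {G : Type*} [Group G] (x y : List G) : Prop :=
  ∃ (l₁ l₂ : List G) (a b : G),
    x = l₁ ++ a :: b :: l₂ ∧ y = l₁ ++ (a * b * a⁻¹) :: a :: l₂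

/-- Braid equivalence: the equivalence relation generated by elementary braid moves. -/
def BraidEquiv {G : Type*} [Group G] : List G → List G → Prop :=
  Relation.EqvGen BraidMove

/-- The Nielsen class `ni(A_n, C_{3^r})`: `r`-tuples of 3-cycles in the alternating
group `A_n` with product 1 whose entries generate `A_n`. -/
def NielsenA (n r : ℕ) (l : List (Equiv.Perm (Fin n))) : Prop :=
  l.length = r ∧ (∀ σ ∈ l, σ.IsThreeCycle) ∧ l.prod = 1 ∧
    Subgroup.closure {σ | σ ∈ l} = alternatingGroup (Fin n)

namespace CoalesceAux

open Equiv Equiv.Perm List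

section GroupPart

variable {G : Type*} [Group G]

lemma be_of_move {x y : List G} (h : BraidMove x y) : BraidEquiv x y :=
  Relation.EqvGen.rel _ _ h

lemma be_refl (l : List G) : BraidEquiv l l := Relation.EqvGen.refl l

lemma be_symm {x y : List G} (h : BraidEquiv x y) : BraidEquiv y x :=
  Relation.EqvGen.symm _ _ h

lemma be_trans {x y z : List G} (h : BraidEquiv x y) (h' : BraidEquiv y z) :
    BraidEquiv x z := Relation.EqvGen.trans _ _ _ h h'

lemma be_front1 (a b : G) (t : List G) :
    BraidEquiv (a :: b :: t) ((a * b * a⁻¹) :: a :: t) :=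
  be_of_move ⟨[], t, a, b, rfl, rfl⟩

lemma be_front2 (a b : G) (t : List G) :
    BraidEquiv (a :: b :: t) (b :: (b⁻¹ * a * b) :: t) := by
  have h : BraidMove (b :: (b⁻¹ * a * b) :: t) ((b * (b⁻¹ * a * b) * b⁻¹) :: b :: t) :=
    ⟨[], t, b, b⁻¹ * a * b, rfl, rfl⟩
  have e : b * (b⁻¹ * a * b) * b⁻¹ = a := by group
  rw [e] at h
  exact be_symm (be_of_move h)

lemma be_cons (c : G) {x y : List G} (h : BraidEquiv x y) :
    BraidEquiv (c :: x) (c :: y) := by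
  unfold BraidEquiv at h ⊢
  induction h with
  | rel u v huv =>
    obtain ⟨l₁, l₂, a, b, hu, hv⟩ := huv
    exact Relation.EqvGen.rel _ _ ⟨c :: l₁, l₂, a, b, by rw [hu]; rfl, by rw [hv]; rfl⟩
  | refl u => exact Relation.EqvGen.refl _
  | symm u v _ ih => exact Relation.EqvGen.symm _ _ ih
  | trans u v w _ _ ih₁ ih₂ => exact Relation.EqvGen.trans _ _ _ ih₁ ih₂

lemma be_prod_eq {x y : List G} (h : BraidEquiv x y) : x.prod = y.prod := by
  unfold BraidEquiv at h
  induction h with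
  | rel u v huv =>
    obtain ⟨l₁, l₂, a, b, hu, hv⟩ := huv
    subst hu; subst hv
    simp [List.prod_append, mul_assoc]
  | refl u => rfl
  | symm u v _ ih => exact ih.symm
  | trans u v w _ _ ih₁ ih₂ => exact ih₁.trans ih₂

end GroupPart

section PermPart

variable {α : Type*} [DecidableEq α] [Fintype α]

lemma conj3 {a b : Perm α} (h : b.IsThreeCycle) : (a * b * a⁻¹).IsThreeCycle := by
  unfold Equiv.Perm.IsThreeCycle at h ⊢
  rw [Equiv.Perm.cycleType_conj]
  exact h

lemma move_threeCycles {x y : List (Perm α)} (h : BraidMove x y) :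
    (∀ g ∈ x, g.IsThreeCycle) ↔ (∀ g ∈ y, g.IsThreeCycle) := by
  obtain ⟨l₁, l₂, a, b, hx, hy⟩ := h
  subst hx; subst hy
  constructor
  · intro hx u hu
    have ha := hx a (by simp)
    have hb := hx b (by simp)
    simp only [List.mem_append, List.mem_cons] at hu
    rcases hu with h | h | h | h
    · exact hx u (by simp [h])
    · rw [h]; exact conj3 hb
    · rw [h]; exact ha
    · exact hx u (by simp [h])
  · intro hy u hu
    have ha : a.IsThreeCycle := hy a (by simp)
    have hc : (a * b * a⁻¹).IsThreeCycle := hy (a * b * a⁻¹) (by simp)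
    have hb : b.IsThreeCycle := by
      have e : b = a⁻¹ * (a * b * a⁻¹) * a⁻¹⁻¹ := by group
      rw [e]; exact conj3 hc
    simp only [List.mem_append, List.mem_cons] at hu
    rcases hu with h | h | h | h
    · exact hy u (by simp [h])
    · rw [h]; exact ha
    · rw [h]; exact hb
    · exact hy u (by simp [h])

lemma be_threeCycles {x y : List (Perm α)} (h : BraidEquiv x y)
    (hx : ∀ g ∈ x, g.IsThreeCycle) : ∀ g ∈ y, g.IsThreeCycle := by
  unfold BraidEquiv at h
  have key : (∀ g ∈ x, g.IsThreeCycle) ↔ (∀ g ∈ y, g.IsThreeCycle) := by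
    clear hx
    induction h with
    | rel u v huv => exact move_threeCycles huv
    | refl u => exact Iff.rfl
    | symm u v _ ih => exact ih.symm
    | trans u v w _ _ ih₁ ih₂ => exact ih₁.trans ih₂
  exact key.mp hx

/-! ### counting entries that move a point -/

/-- number of entries of `l` moving the point `p`. -/
def mov (p : α) : List (Perm α) → ℕ
  | [] => 0
  | g :: t => (if g p ≠ p then 1 else 0) + mov p t

@[simp] lemma mov_nil (p : α) : mov p ([] : List (Perm α)) = 0 := rfl

@[simp] lemma mov_cons (p : α) (g : Perm α) (t : List (Perm α)) :
    mov p (g :: t) = (if g p ≠ p then 1 else 0) + mov p t := rfl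

lemma mov_append (p : α) (x y : List (Perm α)) :
    mov p (x ++ y) = mov p x + mov p y := by
  induction x with
  | nil => simp
  | cons g t ih => simp [ih, add_assoc]

lemma mov_eq_zero {p : α} {l : List (Perm α)} (h : ∀ g ∈ l, g p = p) :
    mov p l = 0 := by
  induction l with
  | nil => rfl
  | cons g t ih =>
    have hg : g p = p := h g (by simp)
    simp [hg, ih fun x hx => h x (by simp [hx])]

lemma mov_zero_fix {p : α} {l : List (Perm α)} (h : mov p l = 0) :
    ∀ g ∈ l, g p = p := by
  induction l with
  | nil => simp
  | cons g t ih =>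
    rw [mov_cons] at h
    by_cases hg : g p = p
    · rw [if_neg (fun hcon => hcon hg)] at h
      intro x hx
      rcases List.mem_cons.mp hx with rfl | hx
      · exact hg
      · exact ih (by omega) x hx
    · rw [if_pos hg] at h
      omega

lemma mov_movers {p : α} {l : List (Perm α)} (h : ∀ g ∈ l, g p ≠ p) :
    mov p l = l.length := by
  induction l with
  | nil => rfl
  | cons g t ih =>
    have hg := h g (by simp)
    rw [mov_cons, if_pos hg, ih fun x hx => h x (by simp [hx])]
    simp [Nat.add_comm]

lemma mov_pos {p : α} {l : List (Perm α)} {g : Perm α} (hg : g ∈ l) (hgp : g p ≠ p) :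
    0 < mov p l := by
  induction l with
  | nil => simp at hg
  | cons x t ih =>
    rcases List.mem_cons.mp hg with rfl | hx
    · simp [hgp]
    · have := ih hx
      simp only [mov_cons]
      omega

lemma prod_apply_fix {p : α} {l : List (Perm α)} (h : ∀ g ∈ l, g p = p) :
    l.prod p = p := by
  induction l with
  | nil => rfl
  | cons g t ih =>
    have ht : t.prod p = p := ih fun x hx => h x (by simp [hx])
    simp [List.prod_cons, Perm.mul_apply, ht, h g (by simp)]

lemma mov_one_prod {p : α} {l : List (Perm α)} (h : mov p l = 1) :
    l.prod p ≠ p := by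
  induction l with
  | nil => simp at h
  | cons g t ih =>
    rw [mov_cons] at h
    by_cases hg : g p = p
    · have ht : mov p t = 1 := by
        rw [if_neg (fun hc => hc hg)] at h
        omega
      have hne := ih ht
      simp only [List.prod_cons, Perm.mul_apply]
      intro he
      exact hne (g.injective (he.trans hg.symm))
    · have ht : mov p t = 0 := by
        rw [if_pos hg] at h
        omega
      have htp : t.prod p = p := prod_apply_fix (mov_zero_fix ht)
      simp [List.prod_cons, Perm.mul_apply, htp, hg]

lemma coverage {p : α} {l : List (Perm α)} (h : l.prod = 1) : mov p l ≠ 1 := by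
  intro h1
  exact mov_one_prod h1 (by rw [h]; rfl)

/-! ### three-cycle local analysis -/

lemma cube {σ : Perm α} (h : σ.IsThreeCycle) (x : α) : σ (σ (σ x)) = x := by
  have h3 : σ ^ 3 = 1 := by
    rw [← h.orderOf]
    exact pow_orderOf_eq_one σ
  have : (σ ^ 3) x = x := by rw [h3]; rfl
  simpa [pow_succ, Perm.mul_apply] using this

lemma d2 {σ : Perm α} (h : σ.IsThreeCycle) {p : α} (hp : σ p ≠ p) : σ (σ p) ≠ p := by
  intro e
  apply hp
  have := congrArg σ e
  rw [cube h] at this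
  exact this.symm

lemma d3 {σ : Perm α} {p : α} (hp : σ p ≠ p) : σ (σ p) ≠ σ p :=
  fun e => hp (σ.injective e)

lemma support_eq {σ : Perm α} (h : σ.IsThreeCycle) {p : α} (hp : σ p ≠ p) :
    σ.support = {p, σ p, σ (σ p)} := by
  have hd1 : p ≠ σ p := fun e => hp e.symm
  have hd2 : p ≠ σ (σ p) := fun e => d2 h hp e.symm
  have hd3 : σ p ≠ σ (σ p) := fun e => d3 hp e.symm
  have hsub : ({p, σ p, σ (σ p)} : Finset α) ⊆ σ.support := by
    intro x hx
    simp only [Finset.mem_insert, Finset.mem_singleton] at hx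
    rw [Equiv.Perm.mem_support]
    rcases hx with rfl | rfl | rfl
    · exact hp
    · exact d3 hp
    · rw [cube h]
      exact fun e => d2 h hp e.symm
  have hc2 : ({p, σ p, σ (σ p)} : Finset α).card = 3 := by
    rw [Finset.card_insert_of_notMem (by simp [hd1, hd2]),
      Finset.card_insert_of_notMem (by simp [hd3]), Finset.card_singleton]
  exact (Finset.eq_of_subset_of_card_le hsub (by rw [h.card_support, hc2])).symm

lemma mem3 {σ : Perm α} (h : σ.IsThreeCycle) {p : α} (hp : σ p ≠ p) {x : α}
    (hx : σ x ≠ x) : x = p ∨ x = σ p ∨ x = σ (σ p) := by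
  have := Equiv.Perm.mem_support.mpr hx
  rw [support_eq h hp] at this
  simpa using this

lemma fix3 {σ : Perm α} (h : σ.IsThreeCycle) {p : α} (hp : σ p ≠ p) {x : α}
    (h1 : x ≠ p) (h2 : x ≠ σ p) (h3 : x ≠ σ (σ p)) : σ x = x := by
  by_contra hx
  rcases mem3 h hp hx with rfl | rfl | rfl
  · exact h1 rfl
  · exact h2 rfl
  · exact h3 rfl

lemma ext3 {σ τ : Perm α} (hσ : σ.IsThreeCycle) (hτ : τ.IsThreeCycle) {p : α}
    (hp : σ p ≠ p) (hq : τ p ≠ p) (e1 : σ p = τ p) (e2 : σ (σ p) = τ (τ p)) :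
    σ = τ := by
  ext x
  by_cases hx : σ x = x
  · rw [hx]
    have h1 : x ≠ p := fun e => hp (e ▸ hx)
    have h2 : x ≠ σ p := fun e => d3 hp (e ▸ hx)
    have h3 : x ≠ σ (σ p) := by
      intro e
      rw [e, cube hσ p] at hx
      exact d2 hσ hp hx.symm
    exact (fix3 hτ hq h1 (e1 ▸ h2) (e2 ▸ h3)).symm
  · rcases mem3 hσ hp hx with rfl | rfl | rfl
    · exact e1
    · calc σ (σ p) = τ (τ p) := e2
        _ = τ (σ p) := by rw [e1]
    · have hc : σ (σ (σ p)) = p := cube hσ p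
      rw [hc, e2]
      have hcτ : τ (τ (τ p)) = p := cube hτ p
      rw [hcτ]

lemma key_local {a b : Perm α} {p : α} (ha : a.IsThreeCycle) (hb : b.IsThreeCycle)
    (hap : a p ≠ p) (hbp : b p ≠ p)
    (hng : ¬(b = a⁻¹ ∨ (a * b).IsThreeCycle ∨ a = b)) :
    (a * b * a⁻¹) p = p ∨ (b⁻¹ * a * b) p = p := by
  by_contra hcon
  push_neg at hcon
  obtain ⟨h1, h2⟩ := hcon
  push_neg at hng
  obtain ⟨hng1, hng2, hng3⟩ := hng
  have hA2inv : a⁻¹ p = a (a p) := by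
    conv_lhs => rw [← cube ha p]
    simp
  -- b moves a (a p)
  have hbA2 : b (a (a p)) ≠ a (a p) := by
    intro e
    apply h1
    simp [Perm.mul_apply, hA2inv, e, cube ha p]
  -- a moves b p
  have haB : a (b p) ≠ b p := by
    intro e
    apply h2
    simp [Perm.mul_apply, e]
  have memb := mem3 hb hbp hbA2
  have mema := mem3 ha hap haB
  have hA2p : a (a p) ≠ p := d2 ha hap
  have hB2p : b (b p) ≠ p := d2 hb hbp
  rcases memb with h | hA | hAB
  · exact hA2p h
  · -- a (a p) = b p
    by_cases hB : b (b p) = a p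
    · -- b = a⁻¹
      apply hng1
      have hainv : a⁻¹ p ≠ p := by
        rw [hA2inv]; exact hA2p
      refine ext3 hb ha.inv hbp hainv ?_ ?_
      · rw [hA2inv]; exact hA.symm
      · -- b (b p) = a⁻¹ (a⁻¹ p)
        rw [hB, hA2inv]
        simp
    · -- (a*b) is a three-cycle
      apply hng2
      have hB2A2 : b (b p) ≠ a (a p) := by
        intro e
        apply hbp
        exact b.injective (by rw [e, hA])
      have hfixB2 : a (b (b p)) = b (b p) :=
        fix3 ha hap hB2p hB hB2A2
      have hapA2 : a p ≠ a (a p) := fun e => hap (a.injective e).symm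
      have keyeq : a * b = swap (a p) (b (b p)) * swap (a p) (a (a p)) := by
        ext x
        simp only [Perm.mul_apply]
        have hpap : p ≠ a p := fun e => hap e.symm
        have hpA2 : p ≠ a (a p) := fun e => hA2p e.symm
        have hpB2 : p ≠ b (b p) := fun e => hB2p e.symm
        by_cases hx0 : x = p
        · have lhs : a (b x) = p := by
            rw [hx0, show b p = a (a p) from hA.symm, cube ha p]
          rw [lhs, hx0, Equiv.swap_apply_of_ne_of_ne hpap hpA2,
            Equiv.swap_apply_of_ne_of_ne hpap hpB2]
        · by_cases hx1 : x = a p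
          · have hbfix : b (a p) = a p :=
              fix3 hb hbp hap (fun e => hapA2 (e.trans hA.symm)) (fun e => hB e.symm)
            have lhs : a (b x) = a (a p) := by rw [hx1, hbfix]
            rw [lhs, hx1, Equiv.swap_apply_left,
              Equiv.swap_apply_of_ne_of_ne (fun e => hapA2 e.symm) (fun e => hB2A2 e.symm)]
          · by_cases hx2 : x = a (a p)
            · have lhs : a (b x) = b (b p) := by rw [hx2, hA, hfixB2]
              rw [lhs, hx2, Equiv.swap_apply_right, Equiv.swap_apply_left]
            · by_cases hx3 : x = b (b p)
              · have lhs : a (b x) = a p := by rw [hx3, cube hb p]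
                rw [lhs, hx3,
                  Equiv.swap_apply_of_ne_of_ne (fun e => hB e) (fun e => hB2A2 e),
                  Equiv.swap_apply_right]
              · have hbfix : b x = x :=
                  fix3 hb hbp hx0 (fun e => hx2 (e.trans hA.symm)) hx3
                have hafix : a x = x := fix3 ha hap hx0 hx1 hx2
                rw [hbfix, hafix,
                  Equiv.swap_apply_of_ne_of_ne hx1 hx2,
                  Equiv.swap_apply_of_ne_of_ne hx1 hx3]
      rw [keyeq]
      exact isThreeCycle_swap_mul_swap_same (fun e => hB e.symm) hapA2
        (fun e => hB2A2 e)
  · -- a (a p) = b (b p)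
    rcases mema with h | hC | hD
    · exact hbp h
    · -- b p = a p ⇒ a = b
      apply hng3
      exact ext3 ha hb hap hbp hC.symm hAB
    · -- b p = a (a p) = b (b p) : contradiction
      have : b p = b (b p) := hD.trans hAB
      exact hbp (b.injective this).symm

/-! ### normalization: braid all movers of `p` to the front -/

lemma sink {p : α} (x : Perm α) (hx : x p = p) :
    ∀ c : List (Perm α), (∀ g ∈ c, g p ≠ p) → ∀ rest : List (Perm α),
      ∃ c' : List (Perm α), BraidEquiv (x :: (c ++ rest)) (c' ++ x :: rest) ∧
        (∀ g ∈ c', g p ≠ p) ∧ c'.length = c.length := by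
  intro c
  induction c with
  | nil =>
    intro _ rest
    exact ⟨[], be_refl _, by simp, rfl⟩
  | cons d c₂ ih =>
    intro hc rest
    obtain ⟨c₂', hbe, hmov, hlen⟩ := ih (fun g hg => hc g (by simp [hg])) rest
    refine ⟨(x * d * x⁻¹) :: c₂', ?_, ?_, by simp [hlen]⟩
    · have step : BraidEquiv (x :: d :: (c₂ ++ rest)) ((x * d * x⁻¹) :: x :: (c₂ ++ rest)) :=
        be_front1 x d (c₂ ++ rest)
      have step2 : BraidEquiv ((x * d * x⁻¹) :: x :: (c₂ ++ rest))
          ((x * d * x⁻¹) :: (c₂' ++ x :: rest)) := be_cons _ hbe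
      exact be_trans (by simpa using step) (by simpa using step2)
    · intro g hg
      rcases List.mem_cons.mp hg with rfl | hg
      · have hdp : d p ≠ p := hc d (by simp)
        have hxinv : x⁻¹ p = p := by
          have h' := congrArg (fun z => x⁻¹ z) hx
          simp only [Perm.inv_def, Equiv.symm_apply_apply] at h'
          exact h'.symm
        simp only [Perm.mul_apply, hxinv]
        intro e
        have h' := congrArg (fun z => x⁻¹ z) e
        simp only [Perm.inv_def, Equiv.symm_apply_apply] at h'
        exact hdp (h'.trans hxinv)
      · exact hmov g hg

lemma norm (p : α) (l : List (Perm α)) :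
    ∃ c f : List (Perm α), BraidEquiv l (c ++ f) ∧ (∀ g ∈ c, g p ≠ p) ∧
      (∀ g ∈ f, g p = p) ∧ c.length = mov p l := by
  induction l with
  | nil => exact ⟨[], [], be_refl _, by simp, by simp, rfl⟩
  | cons x t ih =>
    obtain ⟨c, f, hbe, hc, hf, hlen⟩ := ih
    by_cases hx : x p ≠ p
    · refine ⟨x :: c, f, ?_, ?_, hf, by rw [mov_cons, if_pos hx]; simp only [List.length_cons, hlen]; omega⟩
      · have : BraidEquiv (x :: t) (x :: (c ++ f)) := be_cons x hbe
        simpa using this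
      · intro g hg
        rcases List.mem_cons.mp hg with rfl | hg
        · exact hx
        · exact hc g hg
    · push_neg at hx
      obtain ⟨c', hbe2, hc', hlen'⟩ := sink x hx c hc f
      refine ⟨c', x :: f, ?_, hc', ?_, ?_⟩
      · exact be_trans (be_cons x hbe) hbe2
      · intro g hg
        rcases List.mem_cons.mp hg with rfl | hg
        · exact hx
        · exact hf g hg
      · simp [hlen', hlen, hx]

/-! ### the descent -/

lemma main_descent (p : α) :
    ∀ k : ℕ, ∀ l : List (Perm α), mov p l = k → (∀ g ∈ l, g.IsThreeCycle) →
      l.prod = 1 → 2 ≤ k →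
      ∃ a b t, BraidEquiv l (a :: b :: t) ∧
        (b = a⁻¹ ∨ (a * b).IsThreeCycle ∨ a = b) := by
  intro k
  induction k using Nat.strong_induction_on with
  | _ k IH =>
    intro l hk h3 hprod hk2
    obtain ⟨c, f, hbe, hc, hf, hlen⟩ := norm p l
    have h3m : ∀ g ∈ c ++ f, g.IsThreeCycle := be_threeCycles hbe h3
    have hprodm : (c ++ f).prod = 1 := (be_prod_eq hbe).symm.trans hprod
    rw [hk] at hlen
    match c, hc, hlen with
    | [], _, hlen => simp at hlen; omega
    | [a], _, hlen => simp at hlen; omega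
    | a :: b :: c', hc, hlen =>
      have hap : a p ≠ p := hc a (by simp)
      have hbp : b p ≠ p := hc b (by simp)
      have ha3 : a.IsThreeCycle := h3m a (by simp)
      have hb3 : b.IsThreeCycle := h3m b (by simp)
      have hm : BraidEquiv l (a :: b :: (c' ++ f)) := by simpa using hbe
      by_cases hgood : b = a⁻¹ ∨ (a * b).IsThreeCycle ∨ a = b
      · exact ⟨a, b, c' ++ f, hm, hgood⟩
      · have hc' : ∀ g ∈ c', g p ≠ p := fun g hg => hc g (by simp [hg])
        have hlc' : c'.length + 2 = k := by simpa using hlen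
        have hmovtail : mov p (c' ++ f) = c'.length := by
          rw [mov_append, mov_movers hc', mov_eq_zero hf]
          omega
        rcases key_local ha3 hb3 hap hbp hgood with hcase | hcase
        · -- braid to ((a*b*a⁻¹) :: a :: …); the new head fixes p
          set m₁ : List (Perm α) := (a * b * a⁻¹) :: a :: (c' ++ f) with hm₁
          have hbem : BraidEquiv l m₁ :=
            be_trans hm (be_front1 a b (c' ++ f))
          have hmov1 : mov p m₁ = c'.length + 1 := by
            rw [hm₁, mov_cons, mov_cons, if_neg (fun hcon => hcon hcase), if_pos hap, hmovtail]
            omega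
          have hprod1 : m₁.prod = 1 := (be_prod_eq hbem).symm.trans hprod
          have h31 : ∀ g ∈ m₁, g.IsThreeCycle := be_threeCycles hbem h3
          have hne1 : mov p m₁ ≠ 1 := coverage hprod1
          have hge : 2 ≤ c'.length + 1 := by omega
          obtain ⟨a', b', t', hbe', hg'⟩ :=
            IH (c'.length + 1) (by omega) m₁ hmov1 h31 hprod1 hge
          exact ⟨a', b', t', be_trans hbem hbe', hg'⟩
        · set m₁ : List (Perm α) := b :: (b⁻¹ * a * b) :: (c' ++ f) with hm₁
          have hbem : BraidEquiv l m₁ :=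
            be_trans hm (be_front2 a b (c' ++ f))
          have hmov1 : mov p m₁ = c'.length + 1 := by
            rw [hm₁, mov_cons, mov_cons, if_pos hbp, if_neg (fun hcon => hcon hcase), hmovtail]
            omega
          have hprod1 : m₁.prod = 1 := (be_prod_eq hbem).symm.trans hprod
          have h31 : ∀ g ∈ m₁, g.IsThreeCycle := be_threeCycles hbem h3
          have hne1 : mov p m₁ ≠ 1 := coverage hprod1
          have hge : 2 ≤ c'.length + 1 := by omega
          obtain ⟨a', b', t', hbe', hg'⟩ :=
            IH (c'.length + 1) (by omega) m₁ hmov1 h31 hprod1 hge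
          exact ⟨a', b', t', be_trans hbem hbe', hg'⟩

end PermPart

end CoalesceAux

/-- **Coalescing Lemma.** For `n ≥ 3`, `r ≥ n − 1`, any `g ∈ ni(A_n, C_{3^r})` is braid
equivalent to a tuple whose first two entries `a, b` satisfy `b = a⁻¹`, or `a * b` is a
3-cycle, or `a = b`. -/
theorem coalescing_lemma (n r : ℕ) (hn : 3 ≤ n) (hr : n - 1 ≤ r)
    (g : List (Equiv.Perm (Fin n))) (hg : NielsenA n r g) :
    ∃ (a b : Equiv.Perm (Fin n)) (t : List (Equiv.Perm (Fin n))),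
      BraidEquiv g (a :: b :: t) ∧
      (b = a⁻¹ ∨ (a * b).IsThreeCycle ∨ a = b) := by
  obtain ⟨hlen, h3, hprod, -⟩ := hg
  have hr2 : 1 ≤ g.length := by omega
  match g, h3, hprod, hr2 with
  | g0 :: t, h3, hprod, _ =>
    have h30 : g0.IsThreeCycle := h3 g0 (by simp)
    have hsupp : g0.support.Nonempty := by
      rw [← Finset.card_pos, h30.card_support]
      norm_num
    obtain ⟨p, hp⟩ := hsupp
    have hp' : g0 p ≠ p := Equiv.Perm.mem_support.mp hp
    have hpos : 0 < CoalesceAux.mov p (g0 :: t) :=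
      CoalesceAux.mov_pos (List.mem_cons_self (a := g0) (l := t)) hp'
    have hne : CoalesceAux.mov p (g0 :: t) ≠ 1 := CoalesceAux.coverage hprod
    exact CoalesceAux.main_descent p (CoalesceAux.mov p (g0 :: t)) (g0 :: t) rfl h3 hprod
      (by omega)
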